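/- arXiv:2509.23403 — 5 statements merged into one kernel-verified Lean document; each statement's English description precedes it below -/
import Mathlib

section
/- The unital k-algebra homomorphism m : C(V,Q) → End_k(∧U), obtained by applying the universal property of the Clifford algebra to the map v ↦ m_v, is an isomorphism of k-algebras. -/
/-!
Setup: `k` a field of characteristic zero, `U` a finite-dimensional `k`-vector space,
`V := U ⊕ U*` with quadratic form `Q(w,θ) = θ(w)`; `mOp v` is the operator
`α ↦ w ∧ α + θ⌟α` on `∧U`.  The algebra map `m : C(V,Q) → End_k(∧U)` extending `v ↦ m_v`
(which exists by the universal property, quantified here by its defining property)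
is an isomorphism of `k`-algebras.
-/

open Module

noncomputable def auxBilin (k : Type*) [Field k] (U : Type*) [AddCommGroup U] [Module k U] :
    (U × Module.Dual k U) →ₗ[k] (U × Module.Dual k U) →ₗ[k] k :=
  LinearMap.mk₂ k (fun v w => v.2 w.1)
    (fun v v' w => by simp)
    (fun c v w => by simp)
    (fun v w w' => by simp)
    (fun c v w => by simp)

/-- The quadratic form `Q(w,θ) := θ(w)` on `V = U × U*`. -/
noncomputable def hypQ (k : Type*) [Field k] (U : Type*) [AddCommGroup U] [Module k U] :
    QuadraticForm k (U × Module.Dual k U) :=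
  LinearMap.BilinMap.toQuadraticMap (auxBilin k U)

/-- The operator `m_v : ∧U → ∧U`, `α ↦ w ∧ α + θ⌟α`, for `v = (w,θ) ∈ V = U × U*`. -/
noncomputable def mOp (k : Type*) [Field k] (U : Type*) [AddCommGroup U] [Module k U]
    (v : U × Module.Dual k U) : Module.End k (ExteriorAlgebra k U) :=
  LinearMap.mulLeft k (ExteriorAlgebra.ι k v.1)
    + CliffordAlgebra.contractLeft (Q := (0 : QuadraticForm k U)) v.2

namespace CliffProof
open CliffordAlgebra

variable {k : Type*} [Field k] {M : Type*} [AddCommGroup M] [Module k M]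
variable {ι : Type*} [LinearOrder ι]
set_option linter.unusedSectionVars false

/-- ordered product of `ι Q (b i)` over a list `l`. -/
noncomputable def elp (Q : QuadraticForm k M) (b : ι → M) (l : List ι) : CliffordAlgebra Q :=
  (l.map fun i => CliffordAlgebra.ι Q (b i)).prod

variable (Q : QuadraticForm k M) (b : ι → M)

lemma elp_nil : elp Q b [] = 1 := rfl

lemma elp_cons (i : ι) (l : List ι) :
    elp Q b (i :: l) = CliffordAlgebra.ι Q (b i) * elp Q b l := by
  simp [elp]

lemma elp_append (l₁ l₂ : List ι) : elp Q b (l₁ ++ l₂) = elp Q b l₁ * elp Q b l₂ := by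
  simp [elp]

/-- ordered product over a finset. -/
noncomputable def eF (S : Finset ι) : CliffordAlgebra Q := elp Q b (S.sort (· ≤ ·))

lemma eF_empty : eF Q b ∅ = 1 := by simp [eF, elp]

lemma eF_singleton (i : ι) : eF Q b {i} = CliffordAlgebra.ι Q (b i) := by
  simp [eF, elp]

lemma eF_insert_of_lt {S : Finset ι} {i : ι} (h : ∀ j ∈ S, i < j) (hi : i ∉ S) :
    eF Q b (insert i S) = CliffordAlgebra.ι Q (b i) * eF Q b S := by
  rw [eF, Finset.sort_insert _ (fun j hj => (h j hj).le) hi, elp_cons]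
  rfl

lemma eF_min_peel {S : Finset ι} (hS : S.Nonempty) :
    eF Q b S = CliffordAlgebra.ι Q (b (S.min' hS))
      * eF Q b (S.erase (S.min' hS)) := by
  conv_lhs => rw [← Finset.insert_erase (S.min'_mem hS)]
  refine eF_insert_of_lt Q b (fun j hj => ?_) (Finset.notMem_erase _ _)
  exact lt_of_le_of_ne (S.min'_le j (Finset.mem_of_mem_erase hj))
    (Ne.symm (Finset.ne_of_mem_erase hj))

lemma ι_mul_eF_mem_span (S : Finset ι) (i : ι) :
    CliffordAlgebra.ι Q (b i) * eF Q b S ∈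
      Submodule.span k (eF Q b '' {T | T ⊆ insert i S}) := by
  induction S using Finset.strongInduction generalizing i with
  | _ S ih =>
  rcases S.eq_empty_or_nonempty with rfl | hS
  · rw [eF_empty, mul_one, ← eF_singleton Q b i]
    exact Submodule.subset_span ⟨{i}, by simp, rfl⟩
  · set j := S.min' hS with hj
    set S' := S.erase j with hS'
    have hpeel := eF_min_peel Q b hS
    have hjS : j ∈ S := S.min'_mem hS
    have hS'lt : S' ⊂ S := Finset.erase_ssubset hjS
    have hjlt : ∀ x ∈ S', j < x := fun x hx =>
      lt_of_le_of_ne (S.min'_le x (Finset.mem_of_mem_erase hx))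
        (Ne.symm (Finset.ne_of_mem_erase hx))
    rcases lt_trichotomy i j with hij | rfl | hij
    · have hiS : i ∉ S := fun h => absurd (S.min'_le i h) (not_le.mpr hij)
      have : CliffordAlgebra.ι Q (b i) * eF Q b S = eF Q b (insert i S) :=
        (eF_insert_of_lt Q b (fun x hx => lt_of_lt_of_le hij (S.min'_le x hx)) hiS).symm
      rw [this]
      exact Submodule.subset_span ⟨insert i S, by simp, rfl⟩
    · rw [hpeel, ← mul_assoc, ι_sq_scalar, ← Algebra.smul_def]
      refine Submodule.smul_mem _ _ (Submodule.subset_span ⟨S', ?_, rfl⟩)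
      exact fun x hx => Finset.mem_insert_of_mem (Finset.mem_of_mem_erase hx)
    · -- j < i
      rw [hpeel, ← mul_assoc, ι_mul_ι_comm, sub_mul, ← Algebra.smul_def, mul_assoc]
      refine Submodule.sub_mem _ ?_ ?_
      · refine Submodule.smul_mem _ _ (Submodule.subset_span ⟨S', ?_, rfl⟩)
        exact fun x hx => Finset.mem_insert_of_mem (Finset.mem_of_mem_erase hx)
      · have key := ih S' hS'lt i
        have hmap : (Submodule.span k (eF Q b '' {T | T ⊆ insert i S'})).map
            (LinearMap.mulLeft k (CliffordAlgebra.ι Q (b j)))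
            ≤ Submodule.span k (eF Q b '' {T | T ⊆ insert i S}) := by
          rw [Submodule.map_span, Submodule.span_le]
          rintro _ ⟨_, ⟨T, hT, rfl⟩, rfl⟩
          have hjT : j ∉ T := fun h => by
            rcases Finset.mem_insert.mp (hT h) with h' | h'
            · exact absurd h'.symm hij.ne'
            · exact Finset.notMem_erase _ _ h'
          have hjTlt : ∀ x ∈ T, j < x := fun x hx => by
            rcases Finset.mem_insert.mp (hT hx) with rfl | h'
            · exact hij
            · exact hjlt x h'
          have : LinearMap.mulLeft k (CliffordAlgebra.ι Q (b j)) (eF Q b T)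
              = eF Q b (insert j T) := by
            rw [LinearMap.mulLeft_apply, eF_insert_of_lt Q b hjTlt hjT]
          rw [this]
          refine Submodule.subset_span ⟨insert j T, fun x hx => ?_, rfl⟩
          rcases Finset.mem_insert.mp hx with rfl | h'
          · exact Finset.mem_insert_of_mem hjS
          · rcases Finset.mem_insert.mp (hT h') with rfl | h''
            · exact Finset.mem_insert_self _ _
            · exact Finset.mem_insert_of_mem (Finset.mem_of_mem_erase h'')
        exact hmap ⟨_, key, rfl⟩

lemma ι_mul_eF_mem_span' (S : Finset ι) (i : ι) :
    CliffordAlgebra.ι Q (b i) * eF Q b S ∈ Submodule.span k (Set.range (eF Q b)) :=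
  Submodule.span_mono (by rintro _ ⟨T, _, rfl⟩; exact ⟨T, rfl⟩)
    (ι_mul_eF_mem_span Q b S i)

lemma elp_mem_span (l : List ι) :
    elp Q b l ∈ Submodule.span k (Set.range (eF Q b)) := by
  induction l with
  | nil => rw [elp_nil, ← eF_empty Q b]; exact Submodule.subset_span ⟨∅, rfl⟩
  | cons i t iht =>
    rw [elp_cons]
    have hmap : (Submodule.span k (Set.range (eF Q b))).map
        (LinearMap.mulLeft k (CliffordAlgebra.ι Q (b i)))
        ≤ Submodule.span k (Set.range (eF Q b)) := by
      rw [Submodule.map_span, Submodule.span_le]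
      rintro _ ⟨_, ⟨T, rfl⟩, rfl⟩
      exact ι_mul_eF_mem_span' Q b T i
    exact hmap ⟨_, iht, rfl⟩

lemma eF_span_top (bb : Module.Basis ι k M) :
    Submodule.span k (Set.range (eF Q bb)) = ⊤ := by
  rw [Submodule.eq_top_iff']
  intro x
  induction x using CliffordAlgebra.induction with
  | algebraMap r =>
    rw [Algebra.algebraMap_eq_smul_one, ← eF_empty Q bb]
    exact Submodule.smul_mem _ _ (Submodule.subset_span ⟨∅, rfl⟩)
  | ι m =>
    have hm : m ∈ Submodule.span k (Set.range bb) := by rw [bb.span_eq]; trivial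
    have hmap : (Submodule.span k (Set.range (bb : ι → M))).map
        (CliffordAlgebra.ι Q) ≤ Submodule.span k (Set.range (eF Q bb)) := by
      rw [Submodule.map_span, Submodule.span_le]
      rintro _ ⟨_, ⟨i, rfl⟩, rfl⟩
      rw [← eF_singleton Q bb i]
      exact Submodule.subset_span ⟨{i}, rfl⟩
    exact hmap ⟨m, hm, rfl⟩
  | mul x y hx hy =>
    have hxy : ∀ u ∈ Submodule.span k (Set.range (eF Q bb)),
        ∀ v ∈ Submodule.span k (Set.range (eF Q bb)),
        u * v ∈ Submodule.span k (Set.range (eF Q bb)) := by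
      intro u hu v hv
      induction hu, hv using Submodule.span_induction₂ with
      | mem_mem a b ha hb =>
        obtain ⟨S, rfl⟩ := ha
        obtain ⟨T, rfl⟩ := hb
        rw [eF, eF, ← elp_append]
        exact elp_mem_span Q bb _
      | zero_left => simp
      | zero_right => simp
      | add_left a b c _ _ _ h1 h2 => rw [add_mul]; exact Submodule.add_mem _ h1 h2
      | add_right a b c _ _ _ h1 h2 => rw [mul_add]; exact Submodule.add_mem _ h1 h2
      | smul_left r a b _ _ h => rw [smul_mul_assoc]; exact Submodule.smul_mem _ _ h
      | smul_right r a b _ _ h => rw [mul_smul_comm]; exact Submodule.smul_mem _ _ h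
    exact hxy x hx y hy
  | add x y hx hy => exact Submodule.add_mem _ hx hy



lemma isOrtho_zero (a c : M) : (0 : QuadraticForm k M).IsOrtho a c := by
  simp [QuadraticMap.IsOrtho]

lemma ext_ι_mul_eF (b : ι → M) (S : Finset ι) (i : ι) :
    (i ∈ S → CliffordAlgebra.ι (0 : QuadraticForm k M) (b i) * eF 0 b S = 0) ∧
    (i ∉ S → ∃ c : k, c ≠ 0 ∧
      CliffordAlgebra.ι (0 : QuadraticForm k M) (b i) * eF 0 b S
        = c • eF 0 b (insert i S)) := by
  induction S using Finset.strongInduction generalizing i with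
  | _ S ih =>
  rcases S.eq_empty_or_nonempty with rfl | hS
  · refine ⟨fun h => absurd h (Finset.notMem_empty i), fun _ => ⟨1, one_ne_zero, ?_⟩⟩
    rw [eF_empty, mul_one, one_smul, show (insert i (∅:Finset ι)) = {i} from rfl, eF_singleton]
  · set m0 := S.min' hS with hm0
    set S' := S.erase m0 with hS'
    have hpeel := eF_min_peel (0 : QuadraticForm k M) b hS
    have hm0S : m0 ∈ S := S.min'_mem hS
    have hS'lt : S' ⊂ S := Finset.erase_ssubset hm0S
    have hmlt : ∀ x ∈ S', m0 < x := fun x hx =>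
      lt_of_le_of_ne (S.min'_le x (Finset.mem_of_mem_erase hx))
        (Ne.symm (Finset.ne_of_mem_erase hx))
    rcases lt_trichotomy i m0 with hij | rfl | hij
    · have hiS : i ∉ S := fun h => absurd (S.min'_le i h) (not_le.mpr hij)
      refine ⟨fun h => absurd h hiS, fun _ => ⟨1, one_ne_zero, ?_⟩⟩
      rw [one_smul, eF_insert_of_lt (0 : QuadraticForm k M) b
        (fun x hx => lt_of_lt_of_le hij (S.min'_le x hx)) hiS]
    · refine ⟨fun _ => ?_, fun h => absurd hm0S h⟩
      rw [hpeel, ← mul_assoc, ι_sq_scalar]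
      simp
    · refine ⟨fun hiS => ?_, fun hiS => ?_⟩
      · have hiS' : i ∈ S' := Finset.mem_erase.mpr ⟨hij.ne', hiS⟩
        rw [hpeel, ι_mul_ι_mul_of_isOrtho _ (isOrtho_zero (b i) (b m0)),
          (ih S' hS'lt i).1 hiS', mul_zero, neg_zero]
      · have hiS' : i ∉ S' := fun h => hiS (Finset.mem_of_mem_erase h)
        obtain ⟨c, hc, hc2⟩ := (ih S' hS'lt i).2 hiS'
        refine ⟨-c, neg_ne_zero.mpr hc, ?_⟩
        rw [hpeel, ι_mul_ι_mul_of_isOrtho _ (isOrtho_zero (b i) (b m0)), hc2,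
          mul_smul_comm]
        have hins : CliffordAlgebra.ι (0 : QuadraticForm k M) (b m0) * eF 0 b (insert i S')
            = eF 0 b (insert m0 (insert i S')) := by
          refine (eF_insert_of_lt _ _ (fun x hx => ?_) (fun h => ?_)).symm
          · rcases Finset.mem_insert.mp hx with rfl | h'
            · exact hij
            · exact hmlt x h'
          · rcases Finset.mem_insert.mp h with rfl | h'
            · exact hij.ne rfl
            · exact Finset.notMem_erase _ _ h'
        rw [hins, Finset.insert_comm, Finset.insert_erase hm0S, neg_smul, ← smul_neg]
end CliffProof

namespace CliffProof
open CliffordAlgebra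
variable {k : Type*} [Field k] {M : Type*} [AddCommGroup M] [Module k M]
variable {ι : Type*} [LinearOrder ι]
set_option linter.unusedSectionVars false

lemma coord_apply_basis (b : Module.Basis ι k M) (i j : ι) :
    b.coord i (b j) = if i = j then 1 else 0 := by
  rw [Module.Basis.coord_apply, Module.Basis.repr_self, Finsupp.single_apply]
  simp [eq_comm]

lemma contract_eF (b : Module.Basis ι k M) (S : Finset ι) (i : ι) :
    (i ∉ S → CliffordAlgebra.contractLeft (Q := (0 : QuadraticForm k M)) (b.coord i)
        (eF 0 b S) = 0) ∧
    (i ∈ S → ∃ c : k, c ≠ 0 ∧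
      CliffordAlgebra.contractLeft (Q := (0 : QuadraticForm k M)) (b.coord i) (eF 0 b S)
        = c • eF 0 b (S.erase i)) := by
  induction S using Finset.strongInduction generalizing i with
  | _ S ih =>
  rcases S.eq_empty_or_nonempty with rfl | hS
  · refine ⟨fun _ => ?_, fun h => absurd h (Finset.notMem_empty i)⟩
    rw [eF_empty, contractLeft_one]
  · set m0 := S.min' hS with hm0
    set S' := S.erase m0 with hS'
    have hpeel := eF_min_peel (0 : QuadraticForm k M) (b : ι → M) hS
    have hm0S : m0 ∈ S := S.min'_mem hS
    have hS'lt : S' ⊂ S := Finset.erase_ssubset hm0S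
    have hmlt : ∀ x ∈ S', m0 < x := fun x hx =>
      lt_of_le_of_ne (S.min'_le x (Finset.mem_of_mem_erase hx))
        (Ne.symm (Finset.ne_of_mem_erase hx))
    rw [hpeel, contractLeft_ι_mul, coord_apply_basis]
    by_cases him : i = m0
    · have hiS' : i ∉ S' := him ▸ Finset.notMem_erase m0 S
      rw [if_pos him, (ih S' hS'lt i).1 hiS', mul_zero, sub_zero, one_smul]
      refine ⟨fun h => absurd (him ▸ hm0S) h, fun _ => ⟨1, one_ne_zero, ?_⟩⟩
      rw [one_smul, him]
    · rw [if_neg him, zero_smul, zero_sub]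
      constructor
      · intro hiS
        have hiS' : i ∉ S' := fun h => hiS (Finset.mem_of_mem_erase h)
        rw [(ih S' hS'lt i).1 hiS', mul_zero, neg_zero]
      · intro hiS
        have hiS' : i ∈ S' := Finset.mem_erase.mpr ⟨him, hiS⟩
        obtain ⟨c, hc, hc2⟩ := (ih S' hS'lt i).2 hiS'
        refine ⟨-c, neg_ne_zero.mpr hc, ?_⟩
        rw [hc2, mul_smul_comm]
        have hins : CliffordAlgebra.ι (0 : QuadraticForm k M) (b m0) * eF 0 b (S'.erase i)
            = eF 0 b (insert m0 (S'.erase i)) := by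
          refine (eF_insert_of_lt _ _ (fun x hx => hmlt x (Finset.mem_of_mem_erase hx))
            (fun h => Finset.notMem_erase _ _ (Finset.mem_of_mem_erase h))).symm
        rw [hins, neg_smul]
        congr 2
        rw [hS', ← Finset.erase_insert_of_ne (fun h : m0 = i => him h.symm),
          Finset.insert_erase hm0S]

/-- annihilation operator -/
noncomputable def aOp (b : Module.Basis ι k M) (i : ι) :
    Module.End k (CliffordAlgebra (0 : QuadraticForm k M)) :=
  CliffordAlgebra.contractLeft (Q := (0 : QuadraticForm k M)) (b.coord i)

/-- composite of annihilation operators along a list -/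
noncomputable def opAl (b : Module.Basis ι k M) (l : List ι) :
    Module.End k (CliffordAlgebra (0 : QuadraticForm k M)) :=
  (l.map (aOp b)).prod

lemma opAl_nil (b : Module.Basis ι k M) : opAl b [] = 1 := rfl

lemma opAl_cons (b : Module.Basis ι k M) (i : ι) (l : List ι) (x) :
    opAl b (i :: l) x = aOp b i (opAl b l x) := by
  simp [opAl, Module.End.mul_apply]

lemma opAl_spec (b : Module.Basis ι k M) (l : List ι) (hl : l.Nodup) (T : Finset ι) :
    (l.toFinset ⊆ T → ∃ c : k, c ≠ 0 ∧
      opAl b l (eF 0 b T) = c • eF 0 b (T \ l.toFinset)) ∧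
    (¬ l.toFinset ⊆ T → opAl b l (eF 0 b T) = 0) := by
  induction l with
  | nil =>
    refine ⟨fun _ => ⟨1, one_ne_zero, ?_⟩, fun h => absurd (by simp) h⟩
    simp [opAl_nil]
  | cons i t iht =>
    have hnd := List.nodup_cons.mp hl
    have hit : i ∉ t := hnd.1
    obtain ⟨IH1, IH2⟩ := iht hnd.2
    by_cases hTt : t.toFinset ⊆ T
    · obtain ⟨c, hc, hc2⟩ := IH1 hTt
      by_cases hiT : i ∈ T
      · have hins : i ∈ T \ t.toFinset := Finset.mem_sdiff.mpr ⟨hiT, by simpa using hit⟩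
        obtain ⟨c', hc', hc'2⟩ := (contract_eF b (T \ t.toFinset) i).2 hins
        constructor
        · intro _
          refine ⟨c * c', mul_ne_zero hc hc', ?_⟩
          rw [opAl_cons, hc2, map_smul]
          show c • (aOp b i) (eF 0 (⇑b) (T \ t.toFinset)) = _
          rw [aOp, hc'2, smul_smul, List.toFinset_cons, Finset.sdiff_insert]
        · intro h
          exact absurd (by
            rw [List.toFinset_cons, Finset.insert_subset_iff]
            exact ⟨hiT, hTt⟩) h
      · constructor
        · intro h
          exact absurd (h (by simp)) hiT
        · intro _
          have hnot : i ∉ T \ t.toFinset := fun h => hiT (Finset.mem_sdiff.mp h).1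
          rw [opAl_cons, hc2, map_smul]
          show c • (aOp b i) (eF 0 (⇑b) (T \ t.toFinset)) = _
          rw [aOp, (contract_eF b (T \ t.toFinset) i).1 hnot, smul_zero]
    · have h0 : opAl b t (eF 0 (⇑b) T) = 0 := IH2 hTt
      have hni : ¬ (i :: t).toFinset ⊆ T := fun h =>
        hTt (fun x hx => h (by rw [List.toFinset_cons]; exact Finset.mem_insert_of_mem hx))
      refine ⟨fun h => absurd h hni, fun _ => ?_⟩
      rw [opAl_cons, h0, map_zero]

lemma algebraMapInv_eF (b : Module.Basis ι k M) (T : Finset ι) (hT : T.Nonempty) :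
    ExteriorAlgebra.algebraMapInv (eF (0 : QuadraticForm k M) (b : ι → M) T) = 0 := by
  rw [eF_min_peel (0 : QuadraticForm k M) (b : ι → M) hT, map_mul]
  have : ExteriorAlgebra.algebraMapInv
      (CliffordAlgebra.ι (0 : QuadraticForm k M) (b (T.min' hT))) = 0 := by
    simp [ExteriorAlgebra.algebraMapInv]
  rw [this, zero_mul]

/-- the coefficient-of-`e_S` functional -/
noncomputable def lam (b : Module.Basis ι k M) (S : Finset ι) :
    CliffordAlgebra (0 : QuadraticForm k M) →ₗ[k] k :=
  (ExteriorAlgebra.algebraMapInv (R := k) (M := M)).toLinearMap ∘ₗ opAl b (S.sort (· ≤ ·))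

lemma lam_eF_self (b : Module.Basis ι k M) (S : Finset ι) :
    ∃ c : k, c ≠ 0 ∧ lam b S (eF 0 b S) = c := by
  obtain ⟨c, hc, hc2⟩ := (opAl_spec b (S.sort (· ≤ ·)) (S.sort_nodup (· ≤ ·)) S).1
    (by rw [Finset.sort_toFinset])
  refine ⟨c, hc, ?_⟩
  rw [lam, LinearMap.comp_apply, hc2, Finset.sort_toFinset, Finset.sdiff_self, map_smul,
    eF_empty, AlgHom.toLinearMap_apply, map_one, smul_eq_mul, mul_one]

lemma lam_eF_ne (b : Module.Basis ι k M) (S T : Finset ι) (hTS : T ≠ S) :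
    lam b S (eF 0 b T) = 0 := by
  by_cases hST : S ⊆ T
  · obtain ⟨c, hc, hc2⟩ := (opAl_spec b (S.sort (· ≤ ·)) (S.sort_nodup (· ≤ ·)) T).1
      (by rw [Finset.sort_toFinset]; exact hST)
    rw [lam, LinearMap.comp_apply, hc2, Finset.sort_toFinset, map_smul]
    have hne : (T \ S).Nonempty := by
      rw [Finset.sdiff_nonempty]
      intro h
      exact hTS (Finset.Subset.antisymm h hST)
    rw [AlgHom.toLinearMap_apply, algebraMapInv_eF b _ hne, smul_zero]
  · have := (opAl_spec b (S.sort (· ≤ ·)) (S.sort_nodup (· ≤ ·)) T).2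
      (by rw [Finset.sort_toFinset]; exact hST)
    rw [lam, LinearMap.comp_apply, this, map_zero]

lemma eF_linearIndependent [Fintype ι] (b : Module.Basis ι k M) :
    LinearIndependent k (eF (0 : QuadraticForm k M) (b : ι → M)) := by
  rw [Fintype.linearIndependent_iff]
  intro g hg S
  have := congrArg (lam b S) hg
  rw [map_sum, map_zero] at this
  simp_rw [map_smul] at this
  rw [Finset.sum_eq_single S (fun T _ hT => by rw [lam_eF_ne b S T hT, smul_zero])
    (fun h => absurd (Finset.mem_univ S) h)] at this
  obtain ⟨c, hc, hc2⟩ := lam_eF_self b S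
  rw [hc2, smul_eq_mul] at this
  exact (mul_eq_zero.mp this).resolve_right hc

/-- creation operator -/
noncomputable def cOp (b : Module.Basis ι k M) (i : ι) :
    Module.End k (CliffordAlgebra (0 : QuadraticForm k M)) :=
  LinearMap.mulLeft k (CliffordAlgebra.ι (0 : QuadraticForm k M) (b i))

/-- composite of creation operators along a list -/
noncomputable def opCl (b : Module.Basis ι k M) (l : List ι) :
    Module.End k (CliffordAlgebra (0 : QuadraticForm k M)) :=
  (l.map (cOp b)).prod

lemma opCl_apply (b : Module.Basis ι k M) (l : List ι) (x) :
    opCl b l x = elp (0 : QuadraticForm k M) (b : ι → M) l * x := by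
  induction l generalizing x with
  | nil => simp [opCl, elp]
  | cons i t iht =>
    have : opCl b (i :: t) x = cOp b i (opCl b t x) := by
      simp [opCl, Module.End.mul_apply]
    rw [this, iht, cOp, LinearMap.mulLeft_apply, elp_cons, mul_assoc]

/-- the "vacuum projector" factor -/
noncomputable def pOp (b : Module.Basis ι k M) (i : ι) :
    Module.End k (CliffordAlgebra (0 : QuadraticForm k M)) :=
  aOp b i * cOp b i

lemma pOp_spec (b : Module.Basis ι k M) (i : ι) (T : Finset ι) :
    ∃ d : k, pOp b i (eF 0 b T) = d • eF 0 b T ∧ (d ≠ 0 ↔ i ∉ T) := by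
  by_cases hiT : i ∈ T
  · refine ⟨0, ?_, by simp [hiT]⟩
    have h0 := (ext_ι_mul_eF (k := k) (⇑b) T i).1 hiT
    rw [pOp, Module.End.mul_apply, cOp, LinearMap.mulLeft_apply, h0, map_zero, zero_smul]
  · obtain ⟨c, hc, hc2⟩ := (ext_ι_mul_eF (k := k) (⇑b) T i).2 hiT
    obtain ⟨c', hc', hc'2⟩ := (contract_eF b (insert i T) i).2 (Finset.mem_insert_self i T)
    refine ⟨c * c', ?_, by simp [mul_ne_zero hc hc', hiT]⟩
    rw [pOp, Module.End.mul_apply, cOp, LinearMap.mulLeft_apply, hc2, map_smul]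
    show c • (aOp b i) (eF 0 (⇑b) (insert i T)) = _
    rw [aOp, hc'2, Finset.erase_insert hiT, smul_smul]

/-- composite of vacuum projector factors -/
noncomputable def opPl (b : Module.Basis ι k M) (l : List ι) :
    Module.End k (CliffordAlgebra (0 : QuadraticForm k M)) :=
  (l.map (pOp b)).prod

lemma opPl_spec (b : Module.Basis ι k M) (l : List ι) (T : Finset ι) :
    ∃ d : k, opPl b l (eF 0 b T) = d • eF 0 b T ∧ (d ≠ 0 ↔ ∀ i ∈ l, i ∉ T) := by
  induction l with
  | nil =>
    exact ⟨1, by simp [opPl], by simp⟩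
  | cons i t iht =>
    obtain ⟨d, hd, hd2⟩ := iht
    obtain ⟨d', hd', hd'2⟩ := pOp_spec b i T
    refine ⟨d' * d, ?_, ?_⟩
    · have : opPl b (i :: t) (eF 0 b T) = pOp b i (opPl b t (eF 0 b T)) := by
        simp [opPl, Module.End.mul_apply]
      rw [this, hd, map_smul, hd', smul_smul, mul_comm]
    · rw [mul_ne_zero_iff]
      constructor
      · rintro ⟨h1, h2⟩ j hj
        rcases List.mem_cons.mp hj with rfl | hj'
        · exact hd'2.mp h1
        · exact hd2.mp h2 j hj'
      · intro h
        exact ⟨hd'2.mpr (h i (List.mem_cons_self (a := i) (l := t))),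
          hd2.mpr fun j hj => h j (List.mem_cons_of_mem i hj)⟩

variable [Fintype ι]

/-- the full vacuum projector -/
noncomputable def opP (b : Module.Basis ι k M) :
    Module.End k (CliffordAlgebra (0 : QuadraticForm k M)) :=
  opPl b ((Finset.univ : Finset ι).sort (· ≤ ·))

lemma opP_spec (b : Module.Basis ι k M) (T : Finset ι) :
    ∃ d : k, opP b (eF 0 b T) = d • eF 0 b T ∧ (d ≠ 0 ↔ T = ∅) := by
  obtain ⟨d, hd, hd2⟩ := opPl_spec b ((Finset.univ : Finset ι).sort (· ≤ ·)) T
  refine ⟨d, hd, hd2.trans ?_⟩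
  rw [Finset.eq_empty_iff_forall_notMem]
  constructor
  · exact fun h i => h i (by simp [Finset.mem_sort])
  · exact fun h i _ => h i

/-- the (unnormalised) matrix unit `E_{S,T}` -/
noncomputable def opE (b : Module.Basis ι k M) (S T : Finset ι) :
    Module.End k (CliffordAlgebra (0 : QuadraticForm k M)) :=
  opCl b (S.sort (· ≤ ·)) * opP b * opAl b (T.sort (· ≤ ·))

lemma opE_spec (b : Module.Basis ι k M) (S T : Finset ι) :
    ∃ γ : k, γ ≠ 0 ∧ ∀ R : Finset ι,
      opE b S T (eF 0 b R) = (if R = T then γ else 0) • eF 0 b S := by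
  obtain ⟨c1, hc1, hc1e⟩ := (opAl_spec b (T.sort (· ≤ ·)) (T.sort_nodup _) T).1
    (by rw [Finset.sort_toFinset])
  rw [Finset.sort_toFinset, Finset.sdiff_self] at hc1e
  obtain ⟨d, hde, hd2⟩ := opP_spec b (∅ : Finset ι)
  have hd : d ≠ 0 := hd2.mpr rfl
  refine ⟨c1 * d, mul_ne_zero hc1 hd, fun R => ?_⟩
  have happ : opE b S T (eF 0 b R)
      = opCl b (S.sort (· ≤ ·)) (opP b (opAl b (T.sort (· ≤ ·)) (eF 0 b R))) := by
    simp [opE, Module.End.mul_apply]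
  by_cases hRT : R = T
  · subst hRT
    rw [happ, hc1e, map_smul, hde, map_smul, map_smul, opCl_apply, eF_empty, mul_one,
      if_pos rfl, smul_smul]
    rfl
  · rw [if_neg hRT, zero_smul]
    by_cases hTR : T ⊆ R
    · obtain ⟨c, hc, hce⟩ := (opAl_spec b (T.sort (· ≤ ·)) (T.sort_nodup _) R).1
        (by rw [Finset.sort_toFinset]; exact hTR)
      rw [Finset.sort_toFinset] at hce
      obtain ⟨d', hd'e, hd'2⟩ := opP_spec b (R \ T)
      have hne : ¬ (R \ T) = ∅ := by
        rw [Finset.sdiff_eq_empty_iff_subset]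
        exact fun h => hRT (Finset.Subset.antisymm h hTR)
      have hd'0 : d' = 0 := by_contra fun h => hne (hd'2.mp h)
      rw [happ, hce, map_smul, hd'e, hd'0, zero_smul, smul_zero, map_zero]
    · have := (opAl_spec b (T.sort (· ≤ ·)) (T.sort_nodup _) R).2
        (by rw [Finset.sort_toFinset]; exact hTR)
      rw [happ, this, map_zero, map_zero]


end CliffProof




set_option maxHeartbeats 1600000 in
/-- the unital `k`-algebra homomorphism `m : C(V,Q) → End_k(∧U)` obtained from
the universal property of the Clifford algebra applied to `v ↦ m_v` is an isomorphism of
`k`-algebras. -/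
theorem stmt1 (k : Type*) [Field k] [CharZero k] (U : Type*) [AddCommGroup U] [Module k U]
    [FiniteDimensional k U]
    (φ : CliffordAlgebra (hypQ k U) →ₐ[k] Module.End k (ExteriorAlgebra k U))
    (hφ : ∀ v : U × Module.Dual k U, φ (CliffordAlgebra.ι (hypQ k U) v) = mOp k U v) :
    Function.Bijective φ := by
  classical
  set N := Module.finrank k U with hN
  let bb : Basis (Fin N) k U := Module.finBasis k U
  have hspanU := CliffProof.eF_span_top (0 : QuadraticForm k U) bb
  let B : Basis (Finset (Fin N)) k (ExteriorAlgebra k U) :=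
    Basis.mk (CliffProof.eF_linearIndependent bb) (le_of_eq hspanU.symm)
  have hB : ∀ R, B R = CliffProof.eF (0 : QuadraticForm k U) (⇑bb) R := fun R =>
    Basis.mk_apply _ _ _
  -- creation and annihilation operators are in the range of φ
  have hcmem : ∀ i, CliffProof.cOp bb i ∈ φ.range := fun i =>
    ⟨CliffordAlgebra.ι (hypQ k U) (bb i, 0),
      (hφ _).trans (by simp [mOp, CliffProof.cOp])⟩
  have hamem : ∀ i, CliffProof.aOp bb i ∈ φ.range := fun i =>
    ⟨CliffordAlgebra.ι (hypQ k U) (0, bb.coord i),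
      (hφ _).trans (by simp [mOp, CliffProof.aOp])⟩
  have hclmem : ∀ l : List (Fin N), CliffProof.opCl bb l ∈ φ.range := fun l =>
    Subalgebra.list_prod_mem _ (by
      intro x hx
      obtain ⟨i, _, rfl⟩ := List.mem_map.mp hx
      exact hcmem i)
  have halmem : ∀ l : List (Fin N), CliffProof.opAl bb l ∈ φ.range := fun l =>
    Subalgebra.list_prod_mem _ (by
      intro x hx
      obtain ⟨i, _, rfl⟩ := List.mem_map.mp hx
      exact hamem i)
  have hplmem : ∀ l : List (Fin N), CliffProof.opPl bb l ∈ φ.range := fun l =>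
    Subalgebra.list_prod_mem _ (by
      intro x hx
      obtain ⟨i, _, rfl⟩ := List.mem_map.mp hx
      exact mul_mem (hamem i) (hcmem i))
  have hEmem : ∀ S T : Finset (Fin N), CliffProof.opE bb S T ∈ φ.range := fun S T =>
    mul_mem (mul_mem (hclmem _) (hplmem _)) (halmem _)
  -- matrix units are in the range of φ
  have hMU : ∀ S T : Finset (Fin N),
      ((B.coord T).smulRight (B S)) ∈ φ.range := by
    intro S T
    obtain ⟨γ, hγ, hγe⟩ := CliffProof.opE_spec bb S T
    have heq : ((B.coord T).smulRight (B S)) = γ⁻¹ • CliffProof.opE bb S T := by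
      refine B.ext fun R => ?_
      rw [LinearMap.smulRight_apply, LinearMap.smul_apply, Basis.coord_apply,
        Basis.repr_self, Finsupp.single_apply]
      simp only [hB]
      rw [hγe R, smul_smul, ite_smul, zero_smul, one_smul]
      split_ifs with h
      · rw [inv_mul_cancel₀ hγ, one_smul]
      · rw [mul_zero, zero_smul]
    rw [heq]
    exact Subalgebra.smul_mem _ (hEmem S T) _
  -- surjectivity
  have hsurj : Function.Surjective φ := by
    intro f
    have hf : f = ∑ p : Finset (Fin N) × Finset (Fin N),
        (B.repr (f (B p.2)) p.1) • ((B.coord p.2).smulRight (B p.1)) := by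
      refine B.ext fun R => ?_
      rw [LinearMap.sum_apply]
      have hterm : ∀ p : Finset (Fin N) × Finset (Fin N),
          ((B.repr (f (B p.2)) p.1) • ((B.coord p.2).smulRight (B p.1))) (B R)
          = if R = p.2 then (B.repr (f (B p.2)) p.1) • B p.1 else 0 := by
        intro p
        rw [LinearMap.smul_apply, LinearMap.smulRight_apply, Basis.coord_apply,
          Basis.repr_self, Finsupp.single_apply, ite_smul, zero_smul, one_smul,
          smul_ite, smul_zero]
      rw [Finset.sum_congr rfl fun p _ => hterm p, Fintype.sum_prod_type_right]
      simp only [Finset.sum_ite_irrel, Finset.sum_const_zero, Finset.sum_ite_eq,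
        Finset.mem_univ, if_true]
      exact (B.sum_repr _).symm
    have : f ∈ φ.range := by
      rw [hf]
      exact Subalgebra.sum_mem _ fun p _ => Subalgebra.smul_mem _ (hMU p.1 p.2) _
    obtain ⟨x, hx⟩ := this
    exact ⟨x, hx⟩
  -- finite dimensionality and dimension count
  haveI : FiniteDimensional k (ExteriorAlgebra k U) := Module.Finite.of_basis B
  let bV : Basis (Fin (N + N)) k (U × Module.Dual k U) :=
    (bb.prod bb.dualBasis).reindex finSumFinEquiv
  have hspanV := CliffProof.eF_span_top (hypQ k U) bV
  haveI : Module.Finite k (CliffordAlgebra (hypQ k U)) :=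
    ⟨⟨Finset.univ.image (CliffProof.eF (hypQ k U) (⇑bV)), by
      rw [Finset.coe_image, Finset.coe_univ, Set.image_univ, hspanV]⟩⟩
  have h1 : Module.finrank k (CliffordAlgebra (hypQ k U)) ≤ 2 ^ (N + N) := by
    have hle := finrank_range_le_card (R := k) (CliffProof.eF (hypQ k U) (⇑bV))
    rw [Set.finrank, hspanV, finrank_top k (CliffordAlgebra (hypQ k U))] at hle
    simpa [Fintype.card_finset] using hle
  have h2 : Module.finrank k (Module.End k (ExteriorAlgebra k U)) = 2 ^ (N + N) := by
    rw [Module.finrank_linearMap, finrank_eq_card_basis B, Fintype.card_finset,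
      Fintype.card_fin, ← pow_add]
  have h3 : Module.finrank k (Module.End k (ExteriorAlgebra k U))
      ≤ Module.finrank k (CliffordAlgebra (hypQ k U)) := by
    have hle := LinearMap.finrank_range_le φ.toLinearMap
    have hr : LinearMap.range φ.toLinearMap = ⊤ := LinearMap.range_eq_top.mpr hsurj
    rw [hr, finrank_top k (Module.End k (ExteriorAlgebra k U))] at hle
    exact hle
  have heq : Module.finrank k (CliffordAlgebra (hypQ k U))
      = Module.finrank k (Module.End k (ExteriorAlgebra k U)) :=
    le_antisymm (h2 ▸ h1) h3
  have hinj : Function.Injective φ :=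
    (LinearMap.injective_iff_surjective_of_finrank_eq_finrank
      (f := φ.toLinearMap) heq).mpr hsurj
  exact ⟨hinj, hsurj⟩
end

section
/- Let u be an invertible element of the Clifford algebra C(V,Q) such that u·ι(v)·u⁻¹ ∈ ι(V) for all v ∈ V, where ι : V → C(V,Q) is the canonical embedding, and let ρ_u ∈ GL(V) be the induced linear automorphism determined by ι(ρ_u(v)) = u·ι(v)·u⁻¹. Then for every maximal isotropic subspace W ⊆ V, the operator m(u) ∈ End_k(∧U) maps the pure spinor line ℓ_W isomorphically onto ℓ_{ρ_u(W)}. -/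
/-!
Setup: `k` a field of characteristic zero, `U` a finite-dimensional `k`-vector space,
`V := U ⊕ U*` with quadratic form `Q(w,θ) = θ(w)`; `mOp v` is the operator
`α ↦ w ∧ α + θ⌟α` on `∧U`, `m : C(V,Q) → End(∧U)` the algebra homomorphism extending it
(quantified by its defining property), and `ℓ_W := {λ : m_v λ = 0 ∀ v ∈ W}`.
If `u ∈ C(V,Q)ˣ` conjugates `ι(V)` into itself, inducing `ρ_u ∈ GL(V)`, then `m(u)` maps
`ℓ_W` isomorphically onto `ℓ_{ρ_u(W)}` for every maximal isotropic `W`.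
-/

open Module

/-- The pure spinor space `ℓ_W := {λ ∈ ∧U : m_v(λ) = 0 for all v ∈ W}`. -/
noncomputable def ellW (k : Type*) [Field k] (U : Type*) [AddCommGroup U] [Module k U]
    (W : Submodule k (U × Module.Dual k U)) : Submodule k (ExteriorAlgebra k U) :=
  ⨅ v ∈ W, LinearMap.ker (mOp k U v)

/-- let `u` be an invertible element of `C(V,Q)` conjugating `ι(V)` into
itself, with induced linear automorphism `ρ` of `V` (so `ι(ρ v) = u·ι(v)·u⁻¹`), and let
`m : C(V,Q) → End(∧U)` be the spin representation (`m(ι v) = m_v`).  Then for every maximal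
isotropic `W ⊆ V`, the invertible operator `m(u)` maps `ℓ_W` onto `ℓ_{ρ(W)}`. -/
theorem stmt5 (k : Type*) [Field k] [CharZero k] (U : Type*) [AddCommGroup U] [Module k U]
    [FiniteDimensional k U]
    (φ : CliffordAlgebra (hypQ k U) →ₐ[k] Module.End k (ExteriorAlgebra k U))
    (hφ : ∀ v : U × Module.Dual k U, φ (CliffordAlgebra.ι (hypQ k U) v) = mOp k U v)
    (u : (CliffordAlgebra (hypQ k U))ˣ)
    (ρ : (U × Module.Dual k U) ≃ₗ[k] (U × Module.Dual k U))
    (hρ : ∀ v : U × Module.Dual k U,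
      CliffordAlgebra.ι (hypQ k U) (ρ v) =
        (u : CliffordAlgebra (hypQ k U)) * CliffordAlgebra.ι (hypQ k U) v * ((u⁻¹ : _ˣ) : CliffordAlgebra (hypQ k U)))
    (W : Submodule k (U × Module.Dual k U))
    (hiso : ∀ v ∈ W, ∀ w ∈ W, v.2 w.1 + w.2 v.1 = (0 : k))
    (hdim : Module.finrank k W = Module.finrank k U) :
    (ellW k U W).map (φ (u : CliffordAlgebra (hypQ k U)))
      = ellW k U (W.map (ρ : (U × Module.Dual k U) →ₗ[k] (U × Module.Dual k U))) := by
  ext x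
  simp only [Submodule.mem_map, ellW, Submodule.mem_iInf, LinearMap.mem_ker]
  constructor
  · rintro ⟨y, hy, rfl⟩ v' ⟨v, hv, rfl⟩
    simp only [LinearEquiv.coe_coe]
    have : mOp k U (ρ v) ((φ u) y) = φ ((u : CliffordAlgebra (hypQ k U)) *
        CliffordAlgebra.ι (hypQ k U) v) y := by
      rw [← hφ, ← Module.End.mul_apply, ← map_mul, hρ]
      congr 2
      rw [mul_assoc, Units.inv_mul, mul_one]
    rw [this, map_mul, Module.End.mul_apply, hφ, hy v hv, map_zero]
  · intro hx
    refine ⟨φ (↑u⁻¹ : CliffordAlgebra (hypQ k U)) x, ?_, ?_⟩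
    · intro v hv
      have key : (CliffordAlgebra.ι (hypQ k U) v) * (↑u⁻¹ : CliffordAlgebra (hypQ k U))
          = (↑u⁻¹ : CliffordAlgebra (hypQ k U)) * CliffordAlgebra.ι (hypQ k U) (ρ v) := by
        rw [hρ, ← mul_assoc, ← mul_assoc, Units.inv_mul, one_mul]
      have : mOp k U v ((φ ↑u⁻¹) x)
          = φ (↑u⁻¹ : CliffordAlgebra (hypQ k U)) (mOp k U (ρ v) x) := by
        rw [← hφ, ← hφ, ← Module.End.mul_apply, ← Module.End.mul_apply, ← map_mul, ← map_mul,
          key]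
      rw [this, hx (ρ v) ⟨v, hv, rfl⟩, map_zero]
    · rw [← Module.End.mul_apply, ← map_mul, Units.mul_inv, map_one, Module.End.one_apply]
end

section
/- Let Θ ∈ ∧²U. There exists an invertible element g of the even part of the Clifford algebra C(V,Q) such that: (i) g·τ(g) = 1, where τ is the main anti-involution (reversal) of C(V,Q); (ii) conjugation by g preserves the image ι(V) of V in C(V,Q); and (iii) m(g) ∈ End_k(∧U) is the operator of left exterior multiplication α ↦ exp(Θ) ∧ α, where exp(Θ) := Σ_{j=0}^{N} Θ^{∧j}/j!. In other words, exterior multiplication by exp(Θ) lies in the image of the spin group of (V,Q) under the spin representation. -/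
/-!
Setup: `k` a field of characteristic zero, `U` a finite-dimensional `k`-vector space of
dimension `N`, `V := U ⊕ U*` with quadratic form `Q(w,θ) = θ(w)`; `mOp v` is the operator
`α ↦ w ∧ α + θ⌟α` on `∧U` and `m : C(V,Q) → End(∧U)` the algebra homomorphism extending
it (quantified by its defining property).  `τ` is `CliffordAlgebra.reverse`, the even part
of `C(V,Q)` is `CliffordAlgebra.evenOdd Q 0`, and `exp(Θ) := Σ_{j=0}^{N} Θ^{∧j}/j!`.
-/

open Module

/-- Truncated exponential identity at a nilpotent element. -/
lemma expSum_mul_expSum_neg {k : Type*} [Field k] [CharZero k] {A : Type*} [Ring A]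
    [Algebra k A] (a : A) (N : ℕ) (h : a ^ (N + 1) = 0) :
    (∑ n ∈ Finset.range (N + 1), ((n.factorial : k))⁻¹ • a ^ n) *
      (∑ n ∈ Finset.range (N + 1), ((n.factorial : k))⁻¹ • (-a) ^ n) = 1 := by
  classical
  set P : Polynomial k := (PowerSeries.exp k).trunc (N + 1) with hPdef
  set P' : Polynomial k := (PowerSeries.rescale (-1 : k) (PowerSeries.exp k)).trunc (N + 1)
    with hP'def
  have hcoeff : ∀ i : ℕ, (algebraMap ℚ k) (1 / (i.factorial : ℚ)) = ((i.factorial : k))⁻¹ := by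
    intro i
    rw [one_div, map_inv₀, map_natCast]
  have hPdeg : P.natDegree < N + 1 := PowerSeries.natDegree_trunc_lt _ _
  have hP'deg : P'.natDegree < N + 1 := PowerSeries.natDegree_trunc_lt _ _
  have hPc : ∀ i < N + 1, P.coeff i = ((i.factorial : k))⁻¹ := by
    intro i hi
    rw [hPdef, PowerSeries.coeff_trunc, if_pos hi, PowerSeries.coeff_exp, hcoeff]
  have hP'c : ∀ i < N + 1, P'.coeff i = (-1 : k) ^ i * ((i.factorial : k))⁻¹ := by
    intro i hi
    rw [hP'def, PowerSeries.coeff_trunc, if_pos hi, PowerSeries.coeff_rescale,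
      PowerSeries.coeff_exp, hcoeff]
  have e1 : Polynomial.aeval a P = ∑ n ∈ Finset.range (N + 1), ((n.factorial : k))⁻¹ • a ^ n := by
    rw [Polynomial.aeval_eq_sum_range' hPdeg]
    exact Finset.sum_congr rfl fun i hi => by
      rw [hPc i (Finset.mem_range.mp hi)]
  have e2 : Polynomial.aeval a P'
      = ∑ n ∈ Finset.range (N + 1), ((n.factorial : k))⁻¹ • (-a) ^ n := by
    rw [Polynomial.aeval_eq_sum_range' hP'deg]
    refine Finset.sum_congr rfl fun i hi => ?_
    rw [hP'c i (Finset.mem_range.mp hi)]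
    have : (-a) ^ i = (-1 : k) ^ i • a ^ i := by
      rw [← smul_pow, neg_one_smul]
    rw [this, smul_smul]
    ring_nf
  have hdvd : (Polynomial.X : Polynomial k) ^ (N + 1) ∣ P * P' - 1 := by
    rw [Polynomial.X_pow_dvd_iff]
    intro d hd
    have key : (P * P').coeff d = Polynomial.coeff 1 d := by
      rw [Polynomial.coeff_mul]
      have : ∀ x ∈ Finset.HasAntidiagonal.antidiagonal d, P.coeff x.1 * P'.coeff x.2
          = (PowerSeries.coeff x.1) (PowerSeries.exp k) *
            (PowerSeries.coeff x.2) (PowerSeries.rescale (-1 : k) (PowerSeries.exp k)) := by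
        intro x hx
        have hx' := Finset.HasAntidiagonal.mem_antidiagonal.mp hx
        have h1 : x.1 < N + 1 := by omega
        have h2 : x.2 < N + 1 := by omega
        rw [hPdef, hP'def, PowerSeries.coeff_trunc, PowerSeries.coeff_trunc, if_pos h1, if_pos h2]
      rw [Finset.sum_congr rfl this, ← PowerSeries.coeff_mul]
      have := PowerSeries.exp_mul_exp_neg_eq_one (A := k)
      have heq : PowerSeries.exp k * PowerSeries.rescale (-1 : k) (PowerSeries.exp k) = 1 := this
      rw [heq]
      simp [PowerSeries.coeff_one, Polynomial.coeff_one, eq_comm]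
    rw [Polynomial.coeff_sub, key, sub_self]
  obtain ⟨q, hq⟩ := hdvd
  have := congrArg (Polynomial.aeval a) hq
  rw [map_sub, map_mul, map_mul, map_pow, map_one, Polynomial.aeval_X, h, zero_mul,
    sub_eq_zero] at this
  rw [← e1, ← e2, this]

/-- High powers of the image of `ι` vanish in the exterior algebra. -/
lemma exteriorPow_eq_zero {k : Type*} [Field k] {U : Type*} [AddCommGroup U] [Module k U]
    [FiniteDimensional k U] {m : ℕ} (hm : Module.finrank k U < m)
    {x : ExteriorAlgebra k U}
    (hx : x ∈ (LinearMap.range (ExteriorAlgebra.ι k : U →ₗ[k] ExteriorAlgebra k U)) ^ m) :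
    x = 0 := by
  rw [show (LinearMap.range (ExteriorAlgebra.ι k : U →ₗ[k] ExteriorAlgebra k U)) ^ m
      = ⋀[k]^m U from rfl, ← ExteriorAlgebra.ιMulti_span_fixedDegree] at hx
  induction hx using Submodule.span_induction with
  | mem y hy =>
    obtain ⟨v, rfl⟩ := hy
    refine AlternatingMap.map_linearDependent _ v fun hli => ?_
    have := hli.fintype_card_le_finrank
    simp only [Fintype.card_fin] at this
    omega
  | zero => rfl
  | add x y _ _ hx hy => rw [hx, hy, add_zero]
  | smul c x _ hx => rw [hx, smul_zero]

set_option maxHeartbeats 1000000 in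
/-- for `Θ ∈ ∧²U` there is an invertible element `g` of the even part of the
Clifford algebra `C(V,Q)` with `g·τ(g) = 1`, whose conjugation action preserves `ι(V)`, and
with `m(g)` equal to left exterior multiplication by `exp(Θ)`; i.e. exterior multiplication
by `exp(Θ)` lies in the image of the spin group under the spin representation. -/
theorem stmt7 (k : Type*) [Field k] [CharZero k] (U : Type*) [AddCommGroup U] [Module k U]
    [FiniteDimensional k U]
    (φ : CliffordAlgebra (hypQ k U) →ₐ[k] Module.End k (ExteriorAlgebra k U))
    (hφ : ∀ v : U × Module.Dual k U, φ (CliffordAlgebra.ι (hypQ k U) v) = mOp k U v)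
    (Θ : ExteriorAlgebra k U)
    (hΘ : Θ ∈ (LinearMap.range (ExteriorAlgebra.ι k : U →ₗ[k] ExteriorAlgebra k U)) ^ 2) :
    ∃ g : (CliffordAlgebra (hypQ k U))ˣ,
      (g : CliffordAlgebra (hypQ k U)) ∈ CliffordAlgebra.evenOdd (hypQ k U) 0
      ∧ (g : CliffordAlgebra (hypQ k U)) *
          CliffordAlgebra.reverse (g : CliffordAlgebra (hypQ k U)) = 1
      ∧ (∀ v : U × Module.Dual k U, ∃ v' : U × Module.Dual k U,
          (g : CliffordAlgebra (hypQ k U)) * CliffordAlgebra.ι (hypQ k U) v *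
            ((g⁻¹ : _ˣ) : CliffordAlgebra (hypQ k U)) = CliffordAlgebra.ι (hypQ k U) v')
      ∧ φ (g : CliffordAlgebra (hypQ k U)) =
          LinearMap.mulLeft k
            (∑ j ∈ Finset.range (Module.finrank k U + 1), (j.factorial : k)⁻¹ • Θ ^ j) := by
  classical
  set N := Module.finrank k U with hNdef
  set P : Submodule k (ExteriorAlgebra k U) :=
    LinearMap.range (ExteriorAlgebra.ι k : U →ₗ[k] ExteriorAlgebra k U) with hPdef
  set ιV := CliffordAlgebra.ι (hypQ k U) with hιV
  set inl : U →ₗ[k] U × Module.Dual k U := LinearMap.inl k U (Module.Dual k U) with hinl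
  have hQapp : ∀ v : U × Module.Dual k U, hypQ k U v = v.2 v.1 := fun v => rfl
  have hpolar : ∀ (x y : U × Module.Dual k U),
      QuadraticMap.polar (hypQ k U) x y = x.2 y.1 + y.2 x.1 := by
    intro x y
    exact LinearMap.BilinMap.polar_toQuadraticMap (B := auxBilin k U) x y
  have hQ0 : ∀ u : U, hypQ k U (inl u) = (0 : QuadraticForm k U) u := fun u => by
    rw [hQapp]; simp [hinl]
  let f0 : (0 : QuadraticForm k U) →qᵢ hypQ k U := { toLinearMap := inl, map_app' := hQ0 }
  let j : ExteriorAlgebra k U →ₐ[k] CliffordAlgebra (hypQ k U) := CliffordAlgebra.map f0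
  have hjι : ∀ u : U, j (ExteriorAlgebra.ι k u) = ιV (inl u) := fun u =>
    CliffordAlgebra.map_apply_ι f0 u
  have hΘ2 : Θ ∈ P * P := by rwa [← pow_two]
  -- anticommutation relations
  have hswap : ∀ (u : U) (a : U × Module.Dual k U),
      ιV (inl u) * ιV a + ιV a * ιV (inl u) = algebraMap k _ (a.2 u) := by
    intro u a
    rw [hιV, CliffordAlgebra.ι_mul_ι_add_swap, hpolar]
    simp [hinl]
  have horth : ∀ u w : U, ιV (inl u) * ιV (inl w) = -(ιV (inl w) * ιV (inl u)) := by
    intro u w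
    have h := hswap u (inl w)
    simp only [hinl, LinearMap.inl_apply, LinearMap.zero_apply, map_zero] at h
    exact eq_neg_of_add_eq_zero_left h
  -- the image of `Θ` in the Clifford algebra
  set t : CliffordAlgebra (hypQ k U) := j Θ with htdef
  -- nilpotency
  have hpowP : ∀ n : ℕ, Θ ^ n ∈ P ^ (2 * n) := by
    intro n
    have := Submodule.pow_mem_pow (P ^ 2) hΘ n
    rwa [← pow_mul] at this
  have hΘN : Θ ^ (N + 1) = 0 :=
    exteriorPow_eq_zero (by omega) (hpowP (N + 1))
  have htN : t ^ (N + 1) = 0 := by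
    rw [htdef, ← map_pow, hΘN, map_zero]
  -- reverse t = -t
  have hrev : ∀ x ∈ P * P, CliffordAlgebra.reverse (j x) = -(j x) := by
    intro x hx
    refine Submodule.mul_induction_on hx ?_ ?_
    · rintro x ⟨u, rfl⟩ y ⟨u', rfl⟩
      rw [map_mul, hjι, hjι, CliffordAlgebra.reverse.map_mul]
      rw [hιV, CliffordAlgebra.reverse_ι, CliffordAlgebra.reverse_ι, ← hιV]
      exact horth u' u
    · intro x y hx hy
      rw [map_add, map_add, hx, hy, neg_add]
  -- evenness
  have heven : ∀ x ∈ P * P, j x ∈ CliffordAlgebra.even (hypQ k U) := by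
    intro x hx
    refine Submodule.mul_induction_on hx ?_ ?_
    · rintro x ⟨u, rfl⟩ y ⟨u', rfl⟩
      rw [map_mul, hjι, hjι, hιV]
      have := CliffordAlgebra.ι_mul_ι_mem_evenOdd_zero (hypQ k U) (inl u) (inl u')
      rwa [← CliffordAlgebra.even_toSubmodule, Subalgebra.mem_toSubmodule] at this
    · intro x y hx hy
      rw [map_add]
      exact add_mem hx hy
  -- commutation of t with ι(inl w)
  have hcc : ∀ w : U, t * ιV (inl w) = ιV (inl w) * t := by
    have key : ∀ x ∈ P * P, ∀ w : U, j x * ιV (inl w) = ιV (inl w) * j x := by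
      intro x hx
      refine Submodule.mul_induction_on hx ?_ ?_
      · rintro x ⟨u, rfl⟩ y ⟨u', rfl⟩ w
        rw [map_mul, hjι, hjι, mul_assoc, horth u' w, mul_neg, ← mul_assoc, horth u w,
          neg_mul, neg_neg, mul_assoc]
      · intro x y hx hy w
        rw [map_add, add_mul, mul_add, hx, hy]
    exact fun w => key Θ hΘ2 w
  -- basic commutator relation
  have hcvt : ∀ v : U × Module.Dual k U, ∃ w : U,
      t * ιV v = ιV v * t + ιV (inl w) := by
    have key : ∀ x ∈ P * P, ∀ v : U × Module.Dual k U, ∃ w : U,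
        j x * ιV v = ιV v * j x + ιV (inl w) := by
      intro x hx
      refine Submodule.mul_induction_on hx ?_ ?_
      · rintro x ⟨u, rfl⟩ y ⟨u', rfl⟩ v
        refine ⟨v.2 u' • u - v.2 u • u', ?_⟩
        have e2 : ιV (inl u') * ιV v = algebraMap k _ (v.2 u') - ιV v * ιV (inl u') :=
          eq_sub_of_add_eq (hswap u' v)
        have e1 : ιV (inl u) * ιV v = algebraMap k _ (v.2 u) - ιV v * ιV (inl u) :=
          eq_sub_of_add_eq (hswap u v)
        have hsm : ∀ (c : k) (z : CliffordAlgebra (hypQ k U)), z * algebraMap k _ c = c • z := by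
          intro c z
          rw [Algebra.algebraMap_eq_smul_one, mul_smul_comm, mul_one]
        have hsm2 : ∀ (c : k) (z : CliffordAlgebra (hypQ k U)), algebraMap k _ c * z = c • z := by
          intro c z
          rw [Algebra.algebraMap_eq_smul_one, smul_mul_assoc, one_mul]
        have hι : ιV (inl (v.2 u' • u - v.2 u • u'))
            = v.2 u' • ιV (inl u) - v.2 u • ιV (inl u') := by
          simp only [map_sub, map_smul]
        rw [map_mul, hjι, hjι, hι]
        calc ιV (inl u) * ιV (inl u') * ιV v
            = ιV (inl u) * (ιV (inl u') * ιV v) := by rw [mul_assoc]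
          _ = ιV (inl u) * (algebraMap k _ (v.2 u') - ιV v * ιV (inl u')) := by rw [e2]
          _ = v.2 u' • ιV (inl u) - ιV (inl u) * ιV v * ιV (inl u') := by
              rw [mul_sub, hsm, mul_assoc]
          _ = v.2 u' • ιV (inl u)
              - (algebraMap k _ (v.2 u) - ιV v * ιV (inl u)) * ιV (inl u') := by rw [e1]
          _ = v.2 u' • ιV (inl u)
              - (v.2 u • ιV (inl u') - ιV v * (ιV (inl u) * ιV (inl u'))) := by
              rw [sub_mul, hsm2, mul_assoc]
          _ = ιV v * (ιV (inl u) * ιV (inl u'))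
              + (v.2 u' • ιV (inl u) - v.2 u • ιV (inl u')) := by abel
          _ = ιV v * (ιV (inl u) * ιV (inl u'))
              + (v.2 u' • ιV (inl u) - v.2 u • ιV (inl u')) := rfl
      · intro x y hx hy v
        obtain ⟨w₁, h₁⟩ := hx v
        obtain ⟨w₂, h₂⟩ := hy v
        refine ⟨w₁ + w₂, ?_⟩
        rw [map_add, add_mul, mul_add, h₁, h₂, map_add, map_add]
        abel
    exact fun v => key Θ hΘ2 v
  -- `ι(inl w) * t ^ N = 0`
  have hnil2 : ∀ w : U, ιV (inl w) * t ^ N = 0 := by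
    intro w
    have h1 : ExteriorAlgebra.ι k w * Θ ^ N ∈ P ^ (2 * N + 1) := by
      rw [pow_succ']
      exact Submodule.mul_mem_mul (LinearMap.mem_range_self _ w) (hpowP N)
    have h2 : ExteriorAlgebra.ι k w * Θ ^ N = 0 := exteriorPow_eq_zero (by omega) h1
    calc ιV (inl w) * t ^ N = j (ExteriorAlgebra.ι k w * Θ ^ N) := by
          rw [map_mul, map_pow, hjι]
      _ = 0 := by rw [h2, map_zero]
  -- powers commutator
  have hstep : ∀ (v : U × Module.Dual k U) (w : U),
      t * ιV v = ιV v * t + ιV (inl w) →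
      ∀ n : ℕ, t ^ (n + 1) * ιV v = ιV v * t ^ (n + 1) + (n + 1) • (ιV (inl w) * t ^ n) := by
    intro v w hw
    intro n
    induction n with
    | zero => simpa using hw
    | succ n ih =>
      have e : t ^ (n + 1 + 1) = t * t ^ (n + 1) := by rw [pow_succ']
      rw [e, mul_assoc, ih, mul_add, ← mul_assoc, hw, add_mul, mul_smul_comm,
        ← mul_assoc, hcc w, mul_assoc]
      rw [mul_assoc (ιV (inl w)) t (t ^ n), ← pow_succ' t n]
      rw [succ_nsmul (ιV (inl w) * t ^ (n + 1)) (n + 1)]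
      abel
  -- the candidate unit
  set g₀ : CliffordAlgebra (hypQ k U) :=
    ∑ n ∈ Finset.range (N + 1), ((n.factorial : k))⁻¹ • t ^ n with hg₀
  set g₁ : CliffordAlgebra (hypQ k U) :=
    ∑ n ∈ Finset.range (N + 1), ((n.factorial : k))⁻¹ • (-t) ^ n with hg₁
  have hg₀g₁ : g₀ * g₁ = 1 := expSum_mul_expSum_neg t N htN
  have hg₁g₀ : g₁ * g₀ = 1 := by
    have hneg : (-t) ^ (N + 1) = 0 := by
      rw [neg_pow t (N + 1), htN, mul_zero]
    have := expSum_mul_expSum_neg (k := k) (-t) N hneg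
    simpa [neg_neg] using this
  set g : (CliffordAlgebra (hypQ k U))ˣ := ⟨g₀, g₁, hg₀g₁, hg₁g₀⟩ with hg
  refine ⟨g, ?_, ?_, ?_, ?_⟩
  · -- evenness
    show g₀ ∈ CliffordAlgebra.evenOdd (hypQ k U) 0
    have ht_even : t ∈ CliffordAlgebra.even (hypQ k U) := heven Θ hΘ2
    have ht_pow : ∀ n : ℕ, t ^ n ∈ CliffordAlgebra.even (hypQ k U) := fun n =>
      pow_mem ht_even n
    have hmem : g₀ ∈ Subalgebra.toSubmodule (CliffordAlgebra.even (hypQ k U)) := by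
      refine Submodule.sum_mem _ fun n _ => Submodule.smul_mem _ _ ?_
      exact (Subalgebra.mem_toSubmodule _).mpr (ht_pow n)
    rw [← CliffordAlgebra.even_toSubmodule]
    exact hmem
  · -- g * reverse g = 1
    show g₀ * CliffordAlgebra.reverse g₀ = 1
    have hrevpow : ∀ (x : CliffordAlgebra (hypQ k U)) (n : ℕ),
        CliffordAlgebra.reverse (x ^ n) = (CliffordAlgebra.reverse x) ^ n := by
      intro x n
      induction n with
      | zero => simp
      | succ n ih => rw [pow_succ, CliffordAlgebra.reverse.map_mul, ih, pow_succ']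
    have : CliffordAlgebra.reverse g₀ = g₁ := by
      rw [hg₀, map_sum]
      refine Finset.sum_congr rfl fun n _ => ?_
      rw [map_smul, hrevpow, hrev Θ hΘ2]
    rw [this]; exact hg₀g₁
  · -- conjugation preserves ι V
    intro v
    obtain ⟨w, hw⟩ := hcvt v
    refine ⟨v + inl w, ?_⟩
    have hmain : g₀ * ιV v = ιV (v + inl w) * g₀ := by
      have expand : g₀ * ιV v
          = ∑ n ∈ Finset.range (N + 1), ((n.factorial : k))⁻¹ • (t ^ n * ιV v) := by
        rw [hg₀, Finset.sum_mul]
        exact Finset.sum_congr rfl fun n _ => smul_mul_assoc _ _ _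
      rw [expand, Finset.sum_range_succ']
      have term0 : ((Nat.factorial 0 : k))⁻¹ • (t ^ 0 * ιV v) = ιV v := by simp
      have termS : ∀ i, (((i + 1).factorial : k))⁻¹ • (t ^ (i + 1) * ιV v)
          = ((i + 1).factorial : k)⁻¹ • (ιV v * t ^ (i + 1))
            + ((i.factorial : k))⁻¹ • (ιV (inl w) * t ^ i) := by
        intro i
        rw [hstep v w hw i, smul_add]
        congr 1
        rw [← Nat.cast_smul_eq_nsmul k, smul_smul]
        congr 1
        rw [Nat.factorial_succ]
        have h1 : ((i : k) + 1) ≠ 0 := Nat.cast_add_one_ne_zero i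
        push_cast
        rw [mul_inv, mul_comm (((i : k) + 1))⁻¹ _, mul_assoc, inv_mul_cancel₀ h1, mul_one]
      rw [term0]
      simp_rw [termS]
      rw [Finset.sum_add_distrib]
      have part1 : (∑ i ∈ Finset.range N, ((i + 1).factorial : k)⁻¹ • (ιV v * t ^ (i + 1)))
          + ιV v = ιV v * g₀ := by
        rw [hg₀, Finset.mul_sum, Finset.sum_range_succ']
        simp [mul_smul_comm]
      have part2 : (∑ i ∈ Finset.range N, ((i.factorial : k))⁻¹ • (ιV (inl w) * t ^ i))
          = ιV (inl w) * g₀ := by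
        rw [hg₀, Finset.mul_sum, Finset.sum_range_succ]
        simp_rw [mul_smul_comm]
        rw [show ((N.factorial : k))⁻¹ • (ιV (inl w) * t ^ N) = 0 by rw [hnil2]; simp]
        rw [add_zero]
      rw [add_assoc, add_comm (∑ i ∈ Finset.range N, ((i.factorial : k))⁻¹ • (ιV (inl w) * t ^ i)) (ιV v), ← add_assoc, part1, part2, map_add, add_mul]
    show g₀ * ιV v * g₁ = ιV (v + inl w)
    rw [hmain, mul_assoc, hg₀g₁, mul_one]
  · -- φ(g) is multiplication by exp Θ
    show φ g₀ = LinearMap.mulLeft k (∑ n ∈ Finset.range (N + 1), (n.factorial : k)⁻¹ • Θ ^ n)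
    have hφj : ∀ x : ExteriorAlgebra k U, φ (j x) = LinearMap.mulLeft k x := by
      have : φ.comp j = Algebra.lmul k (ExteriorAlgebra k U) := by
        apply CliffordAlgebra.hom_ext
        ext u : 1
        show φ (j (ExteriorAlgebra.ι k u)) = Algebra.lmul k _ (ExteriorAlgebra.ι k u)
        rw [hjι, hφ (inl u)]
        show mOp k U (inl u) = _
        have : (inl u).2 = (0 : Module.Dual k U) := rfl
        rw [mOp, this, map_zero, add_zero]
        rfl
      intro x
      have := congrArg (fun f => f x) (congrArg DFunLike.coe this)
      exact this
    have : g₀ = j (∑ n ∈ Finset.range (N + 1), (n.factorial : k)⁻¹ • Θ ^ n) := by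
      rw [map_sum]
      exact Finset.sum_congr rfl fun n _ => by rw [map_smul, map_pow]
    rw [this, hφj]
end

section
/- Assume W ⊆ V_K is a K-subspace which is isotropic for b_K and satisfies W ∩ σ(W) = 0 and W + σ(W) = V_K, and let η : K → End_F(V) be the F-algebra embedding determined by W (η_t acts as multiplication by t on W and by ι(t) on σ(W), and preserves V = 1⊗V). Then for all t ∈ K and all x, y ∈ V one has b(η_t(x), y) = b(x, η_{ι(t)}(y)); that is, η_{ι(t)} is the adjoint of η_t with respect to b. -/
/-!
Setup: `F` a field of characteristic zero, `K/F` a quadratic extension with nontrivial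
`F`-automorphism `ι`, `V` a finite-dimensional `F`-vector space, `V_K := K ⊗[F] V`,
`σ := ι ⊗ id`, `V = 1 ⊗ V ⊆ V_K`; `b` a symmetric `F`-bilinear form on `V` with
`K`-bilinear extension `b_K` on `V_K`; `W ⊆ V_K` a `K`-subspace isotropic for `b_K` with
`V_K = W ⊕ σ(W)`, and `η_t` the endomorphism acting as `t` on `W` and `ι(t)` on `σ(W)`
(which preserves `1 ⊗ V`).  Then `η_{ι(t)}` is the adjoint of `η_t` with respect to `b`.
-/

open scoped TensorProduct

/-- The `ι`-semilinear automorphism `σ := ι ⊗ id_V` of `V_K = K ⊗[F] V`. -/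
noncomputable def sigmaMap (F : Type*) [Field F] (K : Type*) [Field K] [Algebra F K]
    (V : Type*) [AddCommGroup V] [Module F V] (ι : K ≃ₐ[F] K) :
    K ⊗[F] V →ₗ[F] K ⊗[F] V :=
  TensorProduct.map ι.toLinearMap LinearMap.id

/-- for all `t ∈ K` and `x, y ∈ V` one has `b(η_t(x), y) = b(x, η_{ι(t)}(y))`
(stated via the `K`-bilinear extension `b_K`, which restricts to `b` on `1 ⊗ V`). -/
theorem stmt10 (F : Type*) [Field F] [CharZero F] (K : Type*) [Field K] [Algebra F K]
    (hdim : Module.finrank F K = 2) (ι : K ≃ₐ[F] K) (hι : ι ≠ AlgEquiv.refl)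
    (V : Type*) [AddCommGroup V] [Module F V] [FiniteDimensional F V]
    (b : V →ₗ[F] V →ₗ[F] F) (hb : ∀ x y : V, b x y = b y x)
    (bK : K ⊗[F] V →ₗ[K] K ⊗[F] V →ₗ[K] K)
    (hbK : ∀ (x y : K) (v w : V),
      bK (x ⊗ₜ[F] v) (y ⊗ₜ[F] w) = x * y * algebraMap F K (b v w))
    (W : Submodule K (K ⊗[F] V))
    (hWiso : ∀ w₁ ∈ W, ∀ w₂ ∈ W, bK w₁ w₂ = 0)
    (h1 : (W.restrictScalars F) ⊓ (W.restrictScalars F).map (sigmaMap F K V ι) = ⊥)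
    (h2 : (W.restrictScalars F) ⊔ (W.restrictScalars F).map (sigmaMap F K V ι) = ⊤)
    (η : K → Module.End F (K ⊗[F] V))
    (hη1 : ∀ t : K, ∀ w ∈ W, η t w = t • w)
    (hη2 : ∀ t : K, ∀ w ∈ W, η t (sigmaMap F K V ι w) = ι t • sigmaMap F K V ι w)
    (hηV : ∀ t : K, ∀ v : V, ∃ v' : V, η t ((1 : K) ⊗ₜ[F] v) = (1 : K) ⊗ₜ[F] v') :
    ∀ (t : K) (x y : V),
      bK (η t ((1 : K) ⊗ₜ[F] x)) ((1 : K) ⊗ₜ[F] y)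
        = bK ((1 : K) ⊗ₜ[F] x) (η (ι t) ((1 : K) ⊗ₜ[F] y)) := by

  intro t x y
  have hσtmul : ∀ (c : K) (v : V), sigmaMap F K V ι (c ⊗ₜ[F] v) = ι c ⊗ₜ[F] v := by
    intro c v; simp [sigmaMap]
  have key : ∀ a b' : K ⊗[F] V,
      bK (sigmaMap F K V ι a) (sigmaMap F K V ι b') = ι (bK a b') := by
    intro a b'
    induction a using TensorProduct.induction_on with
    | zero => simp
    | tmul c v =>
        induction b' using TensorProduct.induction_on with
        | zero => simp
        | tmul d w => simp [hσtmul, hbK, map_mul, ι.commutes]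
        | add p q hp hq => simp [map_add, hp, hq]
    | add p q hp hq => simp [map_add, hp, hq]
  -- decompose 1 ⊗ x and 1 ⊗ y
  have hdec : ∀ v : V, ∃ w ∈ W, ∃ u ∈ W,
      (1 : K) ⊗ₜ[F] v = w + sigmaMap F K V ι u := by
    intro v
    have hv : (1 : K) ⊗ₜ[F] v ∈
        (W.restrictScalars F) ⊔ (W.restrictScalars F).map (sigmaMap F K V ι) := by
      rw [h2]; trivial
    rcases Submodule.mem_sup.mp hv with ⟨w, hw, u', hu', hsum⟩
    rcases hu' with ⟨u, hu, rfl⟩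
    exact ⟨w, hw, u, hu, hsum.symm⟩
  rcases hdec x with ⟨wx, hwx, ux, hux, hx⟩
  rcases hdec y with ⟨wy, hwy, uy, huy, hy⟩
  have hηx : η t ((1 : K) ⊗ₜ[F] x) = t • wx + ι t • sigmaMap F K V ι ux := by
    rw [hx, map_add, hη1 t wx hwx, hη2 t ux hux]
  have hηy : η (ι t) ((1 : K) ⊗ₜ[F] y)
      = ι t • wy + ι (ι t) • sigmaMap F K V ι uy := by
    rw [hy, map_add, hη1 (ι t) wy hwy, hη2 (ι t) uy huy]
  have hww : bK wx wy = 0 := hWiso wx hwx wy hwy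
  have huu : bK (sigmaMap F K V ι ux) (sigmaMap F K V ι uy) = 0 := by
    rw [key, hWiso ux hux uy huy, map_zero]
  -- ι is an involution since [K:F] = 2
  have hFD : FiniteDimensional F K := FiniteDimensional.of_finrank_pos (by omega)
  have hcard : Fintype.card (K →ₐ[F] K) ≤ 2 := by
    have h := finrank_algHom F K
    rwa [Module.finrank_linearMap_self, hdim] at h
  obtain ⟨s, hs⟩ : ∃ s, ι s ≠ s := by
    by_contra hc
    push_neg at hc
    exact hι (AlgEquiv.ext hc)
  have hinv : ∀ z : K, ι (ι z) = z := by
    by_contra hc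
    push_neg at hc
    obtain ⟨u, hu⟩ := hc
    have d01 : (AlgHom.id F K) ≠ ι.toAlgHom := fun e => hs (DFunLike.congr_fun e s).symm
    have d02 : (AlgHom.id F K) ≠ (ι.trans ι).toAlgHom := fun e => hu (DFunLike.congr_fun e u).symm
    have d12 : ι.toAlgHom ≠ (ι.trans ι).toAlgHom := fun e =>
      hs (ι.injective (DFunLike.congr_fun e s)).symm
    classical
    have hc3 : ({AlgHom.id F K, ι.toAlgHom, (ι.trans ι).toAlgHom} :
        Finset (K →ₐ[F] K)).card = 3 := by
      rw [Finset.card_insert_of_notMem (by simp only [Finset.mem_insert, Finset.mem_singleton]; exact not_or.mpr ⟨d01, d02⟩),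
        Finset.card_insert_of_notMem (by simpa using d12), Finset.card_singleton]
    have h3 : 3 ≤ Fintype.card (K →ₐ[F] K) := hc3 ▸ Finset.card_le_univ _
    omega
  rw [hηx, hηy, hx, hy]
  simp only [map_add, map_smul, LinearMap.add_apply, LinearMap.smul_apply,
    hww, huu, smul_zero, zero_add, add_zero, smul_eq_mul, hinv t]
  ring
end

section
/- Assume V ≠ 0, b is a nondegenerate symmetric F-bilinear form on V, and W ⊆ V_K is a K-subspace which is isotropic for b_K and satisfies W ⊕ σ(W) = V_K. Let L be a field, φ : K → L a field embedding, V_L := L ⊗_F V the base change of V along φ|_F : F → L with b_L the L-bilinear extension of b, and let W_φ ⊆ V_L be the L-span of the image of W under the map K ⊗_F V → L ⊗_F V sending x ⊗ v to φ(x) ⊗ v. Then W_φ is a maximal isotropic subspace of (V_L, b_L): b_L vanishes identically on W_φ × W_φ and dim_L W_φ = (dim_F V)/2. -/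
/-!
Setup: `F` a field of characteristic zero, `K/F` a quadratic extension with nontrivial
`F`-automorphism `ι`, `V` a finite-dimensional `F`-vector space, `V_K := K ⊗[F] V` with
`σ := ι ⊗ id`; `b` a nondegenerate symmetric `F`-bilinear form on `V` with `K`-bilinear
extension `b_K`; `W ⊆ V_K` a `b_K`-isotropic `K`-subspace with `V_K = W ⊕ σ(W)`.
`L` is a field containing `K` via an embedding `φ` (over `F`), `V_L := L ⊗[F] V` with the
`L`-bilinear extension `b_L` of `b`, and `W_φ ⊆ V_L` is the `L`-span of the image of `W`
under `x ⊗ v ↦ φ(x) ⊗ v`.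
-/

open scoped TensorProduct

set_option maxHeartbeats 1000000 in
/-- `W_φ` is a maximal isotropic subspace of `(V_L, b_L)`: `b_L` vanishes on
`W_φ × W_φ` and `dim_L W_φ = (dim_F V)/2`. -/
theorem stmt15 (F : Type*) [Field F] [CharZero F] (K : Type*) [Field K] [Algebra F K]
    (hdim : Module.finrank F K = 2) (ι : K ≃ₐ[F] K) (hι : ι ≠ AlgEquiv.refl)
    (V : Type*) [AddCommGroup V] [Module F V] [FiniteDimensional F V] [Nontrivial V]
    (b : V →ₗ[F] V →ₗ[F] F) (hb : ∀ x y : V, b x y = b y x)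
    (hbnd : ∀ x : V, (∀ y : V, b x y = 0) → x = 0)
    (bK : K ⊗[F] V →ₗ[K] K ⊗[F] V →ₗ[K] K)
    (hbK : ∀ (x y : K) (v w : V),
      bK (x ⊗ₜ[F] v) (y ⊗ₜ[F] w) = x * y * algebraMap F K (b v w))
    (W : Submodule K (K ⊗[F] V))
    (hWiso : ∀ w₁ ∈ W, ∀ w₂ ∈ W, bK w₁ w₂ = 0)
    (h1 : (W.restrictScalars F) ⊓ (W.restrictScalars F).map (sigmaMap F K V ι) = ⊥)
    (h2 : (W.restrictScalars F) ⊔ (W.restrictScalars F).map (sigmaMap F K V ι) = ⊤)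
    (L : Type*) [Field L] [Algebra F L] (φ : K →ₐ[F] L)
    (bL : L ⊗[F] V →ₗ[L] L ⊗[F] V →ₗ[L] L)
    (hbL : ∀ (x y : L) (v w : V),
      bL (x ⊗ₜ[F] v) (y ⊗ₜ[F] w) = x * y * algebraMap F L (b v w)) :
    let ψ : K ⊗[F] V →ₗ[F] L ⊗[F] V := TensorProduct.map φ.toLinearMap LinearMap.id
    let Wφ : Submodule L (L ⊗[F] V) := Submodule.span L (ψ '' (W : Set (K ⊗[F] V)))
    (∀ x ∈ Wφ, ∀ y ∈ Wφ, bL x y = 0)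
    ∧ Module.finrank L Wφ = Module.finrank F V / 2 := by
    intro ψ Wφ
    letI : Algebra K L := φ.toRingHom.toAlgebra
    haveI : IsScalarTower F K L :=
      IsScalarTower.of_algebraMap_eq fun x => (φ.commutes x).symm
    -- key: bL (ψ a) (ψ c) = φ (bK a c)
    have hkey : ∀ a c : K ⊗[F] V, bL (ψ a) (ψ c) = φ (bK a c) := by
      intro a c
      induction a using TensorProduct.induction_on with
      | zero => simp
      | tmul x v =>
        induction c using TensorProduct.induction_on with
        | zero => simp
        | tmul y w =>
          simp only [ψ, TensorProduct.map_tmul, AlgHom.toLinearMap_apply,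
            LinearMap.id_coe, id_eq, hbK, hbL, map_mul]
          rw [φ.commutes]
        | add c₁ c₂ h₁ h₂ => simp only [map_add, h₁, h₂]
      | add a₁ a₂ h₁ h₂ =>
        simp only [map_add, LinearMap.add_apply, h₁, h₂]
    constructor
    · -- isotropy
      intro x hx y hy
      induction hx using Submodule.span_induction with
      | mem x hxmem =>
        induction hy using Submodule.span_induction with
        | mem y hymem =>
          obtain ⟨a, ha, rfl⟩ := hxmem
          obtain ⟨c, hc, rfl⟩ := hymem
          rw [hkey, hWiso a ha c hc, map_zero]
        | zero => simp
        | add y₁ y₂ _ _ hy₁ hy₂ => simp [hy₁, hy₂]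
        | smul l y _ hy' => simp [hy']
      | zero => simp
      | add x₁ x₂ _ _ hx₁ hx₂ => simp [hx₁, hx₂]
      | smul l x _ hx' => simp [hx']
    · -- dimension
      haveI : FiniteDimensional F K := Module.finite_of_finrank_eq_succ hdim
      haveI : FiniteDimensional F (K ⊗[F] V) := Module.Finite.tensorProduct F K V
      let eσ : (K ⊗[F] V) ≃ₗ[F] (K ⊗[F] V) :=
        TensorProduct.congr ι.toLinearEquiv (LinearEquiv.refl F V)
      have heσ : (sigmaMap F K V ι) = eσ.toLinearMap := rfl
      have hmapfr : Module.finrank F ((W.restrictScalars F).map (sigmaMap F K V ι))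
          = Module.finrank F (W.restrictScalars F) := by
        rw [heσ]
        exact LinearEquiv.finrank_map_eq eσ (W.restrictScalars F)
      have hsum := Submodule.finrank_sup_add_finrank_inf_eq (W.restrictScalars F)
        ((W.restrictScalars F).map (sigmaMap F K V ι))
      rw [h1, h2, finrank_top, finrank_bot, hmapfr] at hsum
      have htensor : Module.finrank F (K ⊗[F] V)
          = Module.finrank F K * Module.finrank F V := by
        rw [Module.finrank_tensorProduct]
      rw [hdim] at htensor
      -- finrank F W = finrank F V
      have hWF : Module.finrank F (W.restrictScalars F) = Module.finrank F V := by omega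
      -- finrank over K
      have hrs : Module.finrank F (W.restrictScalars F) = Module.finrank F W :=
        LinearEquiv.finrank_eq ((Submodule.restrictScalarsEquiv F K (K ⊗[F] V) W).restrictScalars F)
      haveI : Module.Free K W := Module.Free.of_divisionRing K W
      have hKW : Module.finrank F K * Module.finrank K W = Module.finrank F W :=
        Module.finrank_mul_finrank F K W
      rw [hdim] at hKW
      -- base change
      let e := TensorProduct.AlgebraTensorModule.cancelBaseChange F K L L V
      have he : ∀ (l : L) (x : K ⊗[F] V), e (l ⊗ₜ[K] x) = l • ψ x := by
        intro l x
        induction x using TensorProduct.induction_on with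
        | zero => simp
        | tmul k v =>
          rw [TensorProduct.AlgebraTensorModule.cancelBaseChange_tmul]
          simp only [ψ, TensorProduct.map_tmul, AlgHom.toLinearMap_apply,
            LinearMap.id_coe, id_eq, TensorProduct.smul_tmul']
          congr 1
          rw [Algebra.smul_def, smul_eq_mul, RingHom.algebraMap_toAlgebra, mul_comm]
          rfl
        | add x₁ x₂ hx₁ hx₂ =>
          rw [TensorProduct.tmul_add, map_add, hx₁, hx₂, map_add, smul_add]
      let f : L ⊗[K] W →ₗ[L] L ⊗[F] V := e.toLinearMap ∘ₗ (W.subtype.baseChange L)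
      have hbc : Function.Injective (W.subtype.baseChange L) := by
        show Function.Injective (⇑(W.subtype.baseChange L))
        rw [LinearMap.baseChange_eq_ltensor]
        exact Module.Flat.lTensor_preserves_injective_linearMap W.subtype W.injective_subtype
      have hfinj : Function.Injective f := e.injective.comp hbc
      have hfw : ∀ (l : L) (w : W), f (l ⊗ₜ[K] w) = l • ψ (w : K ⊗[F] V) := by
        intro l w
        simp only [f, LinearMap.comp_apply, LinearMap.baseChange_tmul, Submodule.coe_subtype]
        exact he l w
      have hrange : LinearMap.range f = Wφ := by
        apply le_antisymm
        · rintro _ ⟨t, rfl⟩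
          induction t using TensorProduct.induction_on with
          | zero => simp
          | tmul l w =>
            rw [hfw]
            exact Submodule.smul_mem _ _ (Submodule.subset_span ⟨w, w.2, rfl⟩)
          | add t₁ t₂ ht₁ ht₂ =>
            rw [map_add]
            exact Submodule.add_mem _ ht₁ ht₂
        · rw [show Wφ = Submodule.span L (ψ '' (W : Set (K ⊗[F] V))) from rfl,
            Submodule.span_le]
          rintro _ ⟨a, ha, rfl⟩
          exact ⟨(1 : L) ⊗ₜ[K] (⟨a, ha⟩ : W), by rw [hfw, one_smul]⟩
      have hfr : Module.finrank L Wφ = Module.finrank K W := by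
        rw [← hrange, LinearMap.finrank_range_of_inj hfinj, Module.finrank_baseChange]
      omega
end
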